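/- Let b < -log 2 and for K ≥ 2 define the potential φ_{b,K} on [0,1] for the doubling map by φ_{b,K} = ∑_{k≥0} a_k 1_{(2^{-k-1}, 2^{-k}]} with a_k = b for k < K and a_k = 2 log((k+1)/(k+2)) for k ≥ K. There exists b_K < -log 2 such that ∑_n e^{s_n} ≤ 1 if and only if b ≤ b_K (with equality iff b = b_K), where s_n = ∑_{k<n} a_k. Moreover b_K → -log 2 as K → ∞. -/

import Mathlib

open Filter Finset

/-- `s_n` for the Hofbauer–Keller potential `φ_{b,K}`:
`s_n = nb` for `n ≤ K` and `s_n = Kb + 2 log((K+1)/(n+1))` for `n > K`. -/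
noncomputable def sHK17 (b : ℝ) (K : ℕ) (n : ℕ) : ℝ :=
  if n ≤ K then n * b
  else K * b + 2 * Real.log (((K : ℝ) + 1) / ((n : ℝ) + 1))

/-- telescoping sum -/
lemma hasSum_telescope17 (a : ℝ) (ha : 0 < a) :
    HasSum (fun n : ℕ => 1/((n:ℝ)+a) - 1/((n:ℝ)+a+1)) (1/a) := by
  have hf : ∀ i : ℕ, (0:ℝ) ≤ 1/((i:ℝ)+a) - 1/((i:ℝ)+a+1) := by
    intro i
    have h1 : (0:ℝ) < (i:ℝ)+a := by positivity
    have := one_div_le_one_div_of_le h1 (by linarith : (i:ℝ)+a ≤ (i:ℝ)+a+1)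
    linarith
  rw [hasSum_iff_tendsto_nat_of_nonneg hf]
  have key : ∀ n : ℕ, ∑ i ∈ range n, (1/((i:ℝ)+a) - 1/((i:ℝ)+a+1)) = 1/a - 1/((n:ℝ)+a) := by
    intro n
    have h := Finset.sum_range_sub' (f := fun i : ℕ => 1/((i:ℝ)+a)) n
    have : ∀ i : ℕ, 1/(((i+1:ℕ):ℝ)+a) = 1/((i:ℝ)+a+1) := by
      intro i; push_cast; ring_nf
    simp only [this] at h
    simpa using h
  simp only [key]
  have h2 : Tendsto (fun n : ℕ => 1/((n:ℝ)+a)) atTop (nhds 0) := by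
    simp only [one_div]
    exact Tendsto.inv_tendsto_atTop (tendsto_atTop_add_const_right _ a tendsto_natCast_atTop_atTop)
  have := Tendsto.const_sub (1/a) h2
  simpa using this

lemma q_summable17 (K : ℕ) : Summable (fun n : ℕ => 1/((n:ℝ)+K+2)^2) := by
  have h : Summable (fun n : ℕ => 1/(n:ℝ)^2) :=
    Real.summable_one_div_nat_pow.mpr one_lt_two
  have h2 := (summable_nat_add_iff (K+2)).mpr h
  refine h2.congr fun n => ?_
  push_cast; ring_nf

noncomputable def CHK17 (K : ℕ) : ℝ := ∑' n : ℕ, 1/((n:ℝ)+K+2)^2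

lemma CHK17_pos (K : ℕ) : 0 < CHK17 K :=
  Summable.tsum_pos (q_summable17 K) (fun n => by positivity) 0 (by positivity)

lemma CHK17_lower (K : ℕ) : 1/((K:ℝ)+2) < CHK17 K := by
  have ht := hasSum_telescope17 ((K:ℝ)+2) (by positivity)
  have hle : ∀ n : ℕ, 1/((n:ℝ)+((K:ℝ)+2)) - 1/((n:ℝ)+((K:ℝ)+2)+1) < 1/((n:ℝ)+K+2)^2 := by
    intro n
    set x : ℝ := (n:ℝ)+K+2 with hx
    have hx0 : (0:ℝ) < x := by positivity
    have heq : 1/((n:ℝ)+((K:ℝ)+2)) - 1/((n:ℝ)+((K:ℝ)+2)+1) = 1/(x*(x+1)) := by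
      rw [hx]; field_simp; ring
    rw [heq]
    exact one_div_lt_one_div_of_lt (by positivity) (by nlinarith)
  calc 1/((K:ℝ)+2) = ∑' n : ℕ, (1/((n:ℝ)+((K:ℝ)+2)) - 1/((n:ℝ)+((K:ℝ)+2)+1)) := ht.tsum_eq.symm
    _ < CHK17 K := Summable.tsum_lt_tsum (fun n => (hle n).le) (hle 0) ht.summable (q_summable17 K)

lemma CHK17_upper (K : ℕ) : CHK17 K ≤ 1/((K:ℝ)+1) := by
  have ht := hasSum_telescope17 ((K:ℝ)+1) (by positivity)
  have hle : ∀ n : ℕ, 1/((n:ℝ)+K+2)^2 ≤ 1/((n:ℝ)+((K:ℝ)+1)) - 1/((n:ℝ)+((K:ℝ)+1)+1) := by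
    intro n
    set y : ℝ := (n:ℝ)+K+1 with hy
    have hy0 : (0:ℝ) < y := by positivity
    have heq : 1/((n:ℝ)+((K:ℝ)+1)) - 1/((n:ℝ)+((K:ℝ)+1)+1) = 1/(y*(y+1)) := by
      rw [hy]; field_simp; ring
    have heq2 : 1/((n:ℝ)+K+2)^2 = 1/(y+1)^2 := by rw [hy]; ring_nf
    rw [heq, heq2]
    exact one_div_le_one_div_of_le (by positivity) (by nlinarith)
  calc CHK17 K ≤ ∑' n : ℕ, (1/((n:ℝ)+((K:ℝ)+1)) - 1/((n:ℝ)+((K:ℝ)+1)+1)) :=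
        Summable.tsum_le_tsum hle (q_summable17 K) ht.summable
    _ = 1/((K:ℝ)+1) := ht.tsum_eq
noncomputable def FHK17 (K : ℕ) (b : ℝ) : ℝ :=
  (∑ n ∈ Finset.range K, Real.exp (((n:ℝ)+1)*b)) +
    Real.exp ((K:ℝ)*b) * ((K:ℝ)+1)^2 * CHK17 K

lemma shift_eq17 (K : ℕ) (b : ℝ) (n : ℕ) :
    Real.exp (sHK17 b K (n + K + 1)) =
      (Real.exp ((K:ℝ)*b) * ((K:ℝ)+1)^2) * (1/((n:ℝ)+K+2)^2) := by
  have hgt : ¬ (n + K + 1 ≤ K) := by omega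
  rw [sHK17, if_neg hgt]
  have hx : (0:ℝ) < ((K:ℝ)+1) / (((n+K+1:ℕ):ℝ)+1) := by positivity
  rw [show (2:ℝ) * Real.log (((K:ℝ)+1) / (((n+K+1:ℕ):ℝ)+1))
      = Real.log ((((K:ℝ)+1) / (((n+K+1:ℕ):ℝ)+1))^2) by
    rw [Real.log_pow]; push_cast; ring]
  rw [Real.exp_add, Real.exp_log (by positivity)]
  rw [div_pow]
  push_cast
  field_simp
  ring

lemma tsum_eq17 (K : ℕ) (b : ℝ) :
    (∑' n : ℕ, Real.exp (sHK17 b K (n + 1))) = FHK17 K b := by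
  set f : ℕ → ℝ := fun n => Real.exp (sHK17 b K (n + 1)) with hf
  have hshift : ∀ n : ℕ, f (n + K) =
      (Real.exp ((K:ℝ)*b) * ((K:ℝ)+1)^2) * (1/((n:ℝ)+K+2)^2) := by
    intro n
    have := shift_eq17 K b n
    simpa [hf, add_assoc] using this
  have hsumshift : Summable (fun n => f (n + K)) := by
    refine ((q_summable17 K).mul_left _).congr fun n => (hshift n).symm
  have hsum : Summable f := (summable_nat_add_iff K).mp hsumshift
  rw [← Summable.sum_add_tsum_nat_add K hsum]
  have h1 : ∑ n ∈ Finset.range K, f n = ∑ n ∈ Finset.range K, Real.exp (((n:ℝ)+1)*b) := by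
    refine Finset.sum_congr rfl fun n hn => ?_
    have hn' : n + 1 ≤ K := Finset.mem_range.mp hn
    rw [hf]
    simp only [sHK17, if_pos hn']
    push_cast; ring_nf
  have h2 : (∑' n : ℕ, f (n + K)) = Real.exp ((K:ℝ)*b) * ((K:ℝ)+1)^2 * CHK17 K := by
    rw [tsum_congr hshift, tsum_mul_left]; rfl
  rw [h1, h2]; rfl

lemma FHK17_strictMono (K : ℕ) (hK : 1 ≤ K) : StrictMono (FHK17 K) := by
  intro b c hbc
  have hK0 : (0:ℝ) < (K:ℝ) := by exact_mod_cast hK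
  have h1 : (∑ n ∈ Finset.range K, Real.exp (((n:ℝ)+1)*b)) <
      ∑ n ∈ Finset.range K, Real.exp (((n:ℝ)+1)*c) := by
    refine Finset.sum_lt_sum_of_nonempty (Finset.nonempty_range_iff.mpr (by omega)) ?_
    intro n _
    exact Real.exp_lt_exp.mpr (by nlinarith [Nat.cast_nonneg (α := ℝ) n])
  have h2 : Real.exp ((K:ℝ)*b) * ((K:ℝ)+1)^2 * CHK17 K <
      Real.exp ((K:ℝ)*c) * ((K:ℝ)+1)^2 * CHK17 K := by
    have he : Real.exp ((K:ℝ)*b) < Real.exp ((K:ℝ)*c) :=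
      Real.exp_lt_exp.mpr (by nlinarith)
    have hpos : (0:ℝ) < ((K:ℝ)+1)^2 * CHK17 K := by
      have := CHK17_pos K; positivity
    calc Real.exp ((K:ℝ)*b) * ((K:ℝ)+1)^2 * CHK17 K
        = Real.exp ((K:ℝ)*b) * (((K:ℝ)+1)^2 * CHK17 K) := by ring
      _ < Real.exp ((K:ℝ)*c) * (((K:ℝ)+1)^2 * CHK17 K) := by
          exact mul_lt_mul_of_pos_right he hpos
      _ = Real.exp ((K:ℝ)*c) * ((K:ℝ)+1)^2 * CHK17 K := by ring
  unfold FHK17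
  linarith

lemma FHK17_continuous (K : ℕ) : Continuous (FHK17 K) := by
  unfold FHK17
  fun_prop

lemma FHK17_tendsto_atBot (K : ℕ) (hK : 1 ≤ K) :
    Tendsto (FHK17 K) atBot (nhds 0) := by
  have h1 : Tendsto (fun b => ∑ n ∈ Finset.range K, Real.exp (((n:ℝ)+1)*b)) atBot
      (nhds 0) := by
    have : Tendsto (fun b => ∑ n ∈ Finset.range K, Real.exp (((n:ℝ)+1)*b)) atBot
        (nhds (∑ n ∈ Finset.range K, (0:ℝ))) := by
      refine tendsto_finset_sum _ fun n _ => ?_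
      exact Real.tendsto_exp_atBot.comp (Tendsto.const_mul_atBot (by positivity) tendsto_id)
    simpa using this
  have h2 : Tendsto (fun b => Real.exp ((K:ℝ)*b) * ((K:ℝ)+1)^2 * CHK17 K) atBot (nhds 0) := by
    have he : Tendsto (fun b => Real.exp ((K:ℝ)*b)) atBot (nhds 0) :=
      Real.tendsto_exp_atBot.comp (Tendsto.const_mul_atBot (by exact_mod_cast hK) tendsto_id)
    have := (he.mul_const (((K:ℝ)+1)^2)).mul_const (CHK17 K)
    simpa using this
  have := h1.add h2
  show Tendsto (fun b => FHK17 K b) atBot (nhds 0)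
  simpa [FHK17] using this
lemma FHK17_eq (K : ℕ) (b : ℝ) (hb : Real.exp b < 1) :
    FHK17 K b = Real.exp b * (1 - (Real.exp b)^K)/(1 - Real.exp b) +
      (Real.exp b)^K * ((K:ℝ)+1)^2 * CHK17 K := by
  set r := Real.exp b with hr
  have hr1 : r ≠ 1 := ne_of_lt hb
  have h1 : ∀ n : ℕ, Real.exp (((n:ℝ)+1)*b) = r^(n+1) := by
    intro n
    rw [show ((n:ℝ)+1)*b = ((n+1:ℕ):ℝ)*b by push_cast; ring, Real.exp_nat_mul]
  have h2 : Real.exp ((K:ℝ)*b) = r^K := Real.exp_nat_mul b K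
  unfold FHK17
  rw [h2]
  have h3 : ∑ n ∈ Finset.range K, Real.exp (((n:ℝ)+1)*b) = r * ((r^K - 1)/(r - 1)) := by
    rw [← geom_sum_eq hr1 K, Finset.mul_sum]
    exact Finset.sum_congr rfl fun n _ => by rw [h1 n, pow_succ]; ring
  rw [h3]
  have hne : r - 1 ≠ 0 := sub_ne_zero.mpr hr1
  have hne' : (1:ℝ) - r ≠ 0 := sub_ne_zero.mpr (ne_of_gt hb)
  field_simp
  ring

lemma exp_neg_log_two : Real.exp (-Real.log 2) = 1/2 := by
  rw [Real.exp_neg, Real.exp_log two_pos]; norm_num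

lemma FHK17_gt_one (K : ℕ) (hK : 2 ≤ K) : 1 < FHK17 K (-Real.log 2) := by
  have hK1 : (1:ℝ) ≤ (K:ℝ) := by exact_mod_cast Nat.one_le_of_lt hK
  have hhalf : Real.exp (-Real.log 2) = 1/2 := exp_neg_log_two
  rw [FHK17_eq K _ (by rw [hhalf]; norm_num), hhalf]
  have hC : 1/((K:ℝ)+2) < CHK17 K := CHK17_lower K
  have h2 : 1/(((K:ℝ)+1)^2) ≤ 1/((K:ℝ)+2) :=
    one_div_le_one_div_of_le (by positivity) (by nlinarith)
  have h3 : 1 < ((K:ℝ)+1)^2 * CHK17 K := by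
    have h4 : 1/(((K:ℝ)+1)^2) < CHK17 K := lt_of_le_of_lt h2 hC
    have h5 : ((K:ℝ)+1)^2 * (1/(((K:ℝ)+1)^2)) < ((K:ℝ)+1)^2 * CHK17 K :=
      mul_lt_mul_of_pos_left h4 (by positivity)
    have h6 : ((K:ℝ)+1)^2 * (1/(((K:ℝ)+1)^2)) = 1 := by field_simp
    linarith
  have hp : (0:ℝ) < (1/2:ℝ)^K := by positivity
  have hgeom : (1/2:ℝ) * (1 - (1/2:ℝ)^K)/(1 - 1/2) = 1 - (1/2:ℝ)^K := by
    field_simp; ring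
  rw [hgeom]
  nlinarith

lemma exists_bK17 (K : ℕ) (hK : 2 ≤ K) : ∃ b, b < -Real.log 2 ∧ FHK17 K b = 1 := by
  have hev : ∀ᶠ b in atBot, FHK17 K b < 1 :=
    (FHK17_tendsto_atBot K (by omega)).eventually_lt_const one_pos
  obtain ⟨N, hN⟩ := eventually_atBot.mp hev
  set b0 : ℝ := min N (-Real.log 2 - 1) with hb0
  have hb0lt : b0 < -Real.log 2 := by
    have : b0 ≤ -Real.log 2 - 1 := min_le_right _ _
    linarith
  have hFb0 : FHK17 K b0 < 1 := hN b0 (min_le_left _ _)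
  have hsub := intermediate_value_Ioo (le_of_lt hb0lt) (FHK17_continuous K).continuousOn
  have hmem : (1:ℝ) ∈ Set.Ioo (FHK17 K b0) (FHK17 K (-Real.log 2)) :=
    ⟨hFb0, FHK17_gt_one K hK⟩
  obtain ⟨b, hbmem, hfb⟩ := hsub hmem
  exact ⟨b, hbmem.2, hfb⟩

noncomputable def bK17 (K : ℕ) : ℝ :=
  if h : 2 ≤ K then (exists_bK17 K h).choose else 0

lemma bK17_lt (K : ℕ) (hK : 2 ≤ K) : bK17 K < -Real.log 2 := by
  rw [bK17, dif_pos hK]; exact (exists_bK17 K hK).choose_spec.1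

lemma bK17_eq (K : ℕ) (hK : 2 ≤ K) : FHK17 K (bK17 K) = 1 := by
  rw [bK17, dif_pos hK]; exact (exists_bK17 K hK).choose_spec.2
lemma pow_mul_tendsto17 {r : ℝ} (h0 : 0 ≤ r) (h1 : r < 1) :
    Tendsto (fun K : ℕ => r^K * ((K:ℝ)+1)) atTop (nhds 0) := by
  have hnorm : ‖r‖ < 1 := by rwa [Real.norm_eq_abs, abs_of_nonneg h0]
  have hs1 : Summable (fun n : ℕ => (n:ℝ)^1 * r^n) :=
    summable_pow_mul_geometric_of_norm_lt_one 1 hnorm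
  have hs2 : Summable (fun n : ℕ => r^n) := summable_geometric_of_lt_one h0 h1
  have hs : Summable (fun K : ℕ => r^K * ((K:ℝ)+1)) := by
    refine (hs1.add hs2).congr fun n => ?_
    ring
  exact hs.tendsto_atTop_zero

lemma eventually_FHK17_lt_one {a : ℝ} (ha : a < -Real.log 2) :
    ∀ᶠ K : ℕ in atTop, FHK17 K a < 1 := by
  set r := Real.exp a with hr
  have hr0 : 0 < r := Real.exp_pos a
  have hrhalf : r < 1/2 := by
    rw [hr, ← exp_neg_log_two]
    exact Real.exp_lt_exp.mpr ha
  have hr1 : r < 1 := by linarith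
  have hδ : 0 < 1 - r/(1-r) := by
    rw [sub_pos, div_lt_one (by linarith)]
    linarith
  have hev := (pow_mul_tendsto17 hr0.le hr1).eventually_lt_const hδ
  filter_upwards [hev] with K hK
  rw [FHK17_eq K a hr1, ← hr]
  have hpK : (0:ℝ) ≤ r^K := by positivity
  have hb1 : r * (1 - r^K)/(1 - r) ≤ r/(1-r) := by
    have h : r * (1 - r^K) ≤ r := by nlinarith
    exact div_le_div_of_nonneg_right h (by linarith) |>.trans_eq rfl
  have hb2 : r^K * ((K:ℝ)+1)^2 * CHK17 K ≤ r^K * ((K:ℝ)+1) := by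
    have hC : CHK17 K ≤ 1/((K:ℝ)+1) := CHK17_upper K
    have hCpos : 0 < CHK17 K := CHK17_pos K
    have : r^K * ((K:ℝ)+1)^2 * CHK17 K ≤ r^K * ((K:ℝ)+1)^2 * (1/((K:ℝ)+1)) := by
      have hpos : (0:ℝ) ≤ r^K * ((K:ℝ)+1)^2 := by positivity
      exact mul_le_mul_of_nonneg_left hC hpos
    have heq : r^K * ((K:ℝ)+1)^2 * (1/((K:ℝ)+1)) = r^K * ((K:ℝ)+1) := by
      field_simp
    linarith
  linarith


/-- For each `K ≥ 2` there exists `b_K < -log 2` such that, for `b < -log 2`,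
`∑_{n ≥ 1} e^{s_n} ≤ 1` iff `b ≤ b_K` (with equality iff `b = b_K`); moreover
`b_K → -log 2` as `K → ∞`. -/
theorem stmt17 :
    ∃ bK : ℕ → ℝ,
      (∀ K : ℕ, 2 ≤ K →
        bK K < -Real.log 2 ∧
        ∀ b : ℝ, b < -Real.log 2 →
          ((∑' n : ℕ, Real.exp (sHK17 b K (n + 1))) ≤ 1 ↔ b ≤ bK K) ∧
          ((∑' n : ℕ, Real.exp (sHK17 b K (n + 1))) = 1 ↔ b = bK K)) ∧
      Tendsto bK atTop (nhds (-Real.log 2)) := by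
  refine ⟨bK17, fun K hK => ⟨bK17_lt K hK, fun b _ => ?_⟩, ?_⟩
  · have hmono := FHK17_strictMono K (by omega)
    constructor
    · rw [tsum_eq17, ← bK17_eq K hK]
      exact hmono.le_iff_le
    · rw [tsum_eq17, ← bK17_eq K hK]
      exact hmono.injective.eq_iff
  · rw [tendsto_order]
    constructor
    · intro a ha
      filter_upwards [eventually_FHK17_lt_one ha, eventually_ge_atTop 2] with K hFK hK2
      have hmono := FHK17_strictMono K (by omega)
      have : FHK17 K a < FHK17 K (bK17 K) := by rw [bK17_eq K hK2]; exact hFK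
      exact hmono.lt_iff_lt.mp this
    · intro a ha
      filter_upwards [eventually_ge_atTop 2] with K hK2
      exact (bK17_lt K hK2).trans ha
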